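/- Under the degree-elevation relation f_i = \alpha_i \hat{f}_i + (1-\alpha_i)\hat{f}_{i+1} for i = 1,...,K with \alpha_1 = 1, \alpha_{K+1} = 0 (and f_{K+1} = \hat{f}_{K+2} = 0), a spline \sum_{i=1}^K c_i (f_i - f_{i+1}) equals \sum_{i=1}^{K+1} \hat{c}_i(\hat{f}_i - \hat{f}_{i+1}) with \hat{c}_1 = c_1, \hat{c}_i = \alpha_i c_i + (1-\alpha_i)c_{i-1} for 2 \le i \le K, \hat{c}_{K+1} = c_K. -/

import Mathlib

/-- Control point formula for local degree elevation of MD-splines. -/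
theorem stmt19 (K : ℕ) (hK : 1 ≤ K) (f fh : ℕ → ℝ → ℝ) (α c ch : ℕ → ℝ)
    (hrel : ∀ i ∈ Finset.Icc 1 K, ∀ x, f i x = α i * fh i x + (1 - α i) * fh (i + 1) x)
    (hfK : ∀ x, f (K + 1) x = 0)
    (hfhK : ∀ x, fh (K + 2) x = 0)
    (hα1 : α 1 = 1) (hαK : α (K + 1) = 0)
    (hch1 : ch 1 = c 1)
    (hchmid : ∀ i ∈ Finset.Icc 2 K, ch i = α i * c i + (1 - α i) * c (i - 1))
    (hchK : ch (K + 1) = c K) :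
    ∀ x, ∑ i ∈ Finset.Icc 1 K, c i * (f i x - f (i + 1) x)
        = ∑ i ∈ Finset.Icc 1 (K + 1), ch i * (fh i x - fh (i + 1) x) := by
  intro x
  set G : ℕ → ℝ := fun i => α i * fh i x + (1 - α i) * fh (i + 1) x with hG
  have hLHS : ∑ i ∈ Finset.Icc 1 K, c i * (f i x - f (i + 1) x)
      = ∑ i ∈ Finset.Icc 1 K, c i * (G i - G (i + 1)) := by
    apply Finset.sum_congr rfl
    intro i hi
    have hi' := Finset.mem_Icc.mp hi
    have h1 : f i x = G i := hrel i hi x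
    have h2 : f (i + 1) x = G (i + 1) := by
      rcases eq_or_lt_of_le hi'.2 with h | h
      · subst h
        simp [hG, hfK, hfhK, hαK]
      · exact hrel (i + 1) (Finset.mem_Icc.mpr ⟨le_trans hi'.1 (Nat.le_succ i), h⟩) x
    rw [h1, h2]
  have hRHS : ∑ i ∈ Finset.Icc 1 (K + 1), ch i * (fh i x - fh (i + 1) x)
      = ∑ i ∈ Finset.Icc 1 (K + 1),
          (α i * c i + (1 - α i) * c (i - 1)) * (fh i x - fh (i + 1) x) := by
    apply Finset.sum_congr rfl
    intro i hi
    have hi' := Finset.mem_Icc.mp hi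
    congr 1
    rcases eq_or_lt_of_le hi'.1 with h1 | h1
    · rw [← h1, hch1, hα1]; ring
    · rcases eq_or_lt_of_le hi'.2 with h2 | h2
      · subst h2
        rw [hchK, hαK]
        simp
      · exact hchmid i (Finset.mem_Icc.mpr ⟨h1, Nat.lt_succ_iff.mp h2⟩)
  rw [hLHS, hRHS]
  have split : ∀ i ∈ Finset.Icc 1 (K + 1),
      (α i * c i + (1 - α i) * c (i - 1)) * (fh i x - fh (i + 1) x)
      = α i * c i * (fh i x - fh (i + 1) x)
        + (1 - α i) * c (i - 1) * (fh i x - fh (i + 1) x) := fun i _ => by ring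
  rw [Finset.sum_congr rfl split, Finset.sum_add_distrib]
  -- first sum: peel top term (zero since α (K+1) = 0)
  have hA : ∑ i ∈ Finset.Icc 1 (K + 1), α i * c i * (fh i x - fh (i + 1) x)
      = ∑ i ∈ Finset.Icc 1 K, α i * c i * (fh i x - fh (i + 1) x) := by
    rw [Finset.sum_Icc_succ_top (by omega : 1 ≤ K + 1), hαK]
    ring
  -- second sum: reindex and drop zero bottom term (since α 1 = 1)
  have hB : ∑ i ∈ Finset.Icc 1 (K + 1), (1 - α i) * c (i - 1) * (fh i x - fh (i + 1) x)
      = ∑ i ∈ Finset.Icc 1 K, (1 - α (i + 1)) * c i * (fh (i + 1) x - fh (i + 2) x) := by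
    have hmap : Finset.Icc 1 (K + 1) = (Finset.Icc 0 K).map (addRightEmbedding 1) := by
      rw [Finset.map_add_right_Icc]
    rw [hmap, Finset.sum_map]
    have h0 : Finset.Icc 0 K = insert 0 (Finset.Icc 1 K) := by
      ext i; simp; omega
    rw [h0, Finset.sum_insert (by simp)]
    simp only [addRightEmbedding_apply]
    rw [show (0 : ℕ) + 1 = 1 from rfl, hα1]
    simp only [sub_self, zero_mul]
    rw [zero_add]
    apply Finset.sum_congr rfl
    intro i hi
    have : i + 1 - 1 = i := by omega
    rw [this]
  rw [hA, hB, ← Finset.sum_add_distrib]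
  apply Finset.sum_congr rfl
  intro i _
  simp only [hG]
  ring
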